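/- Let (x, λ) be an approximate KKT point for projection onto a polyhedron: λ ≥ 0, Gx ≤ h, λ_i(Gx − h)_i = 0, and ‖(x − a) + Gᵀλ‖ ≤ ε. Then ‖x − proj(a)‖ ≤ ε, where proj(a) is the exact Euclidean projection of a onto {y | Gy ≤ h}. -/

import Mathlib

set_option maxHeartbeats 1000000
open Matrix

/-- An ε-approximate KKT point (feasible, complementary, with stationarity residual ≤ ε)
is within ε of the exact Euclidean projection. -/
theorem approx_kkt_error_bound {n m : ℕ}
    (a : EuclideanSpace ℝ (Fin n)) (G : Matrix (Fin m) (Fin n) ℝ) (h : Fin m → ℝ)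
    (S : Set (EuclideanSpace ℝ (Fin n)))
    (hS : S = {y : EuclideanSpace ℝ (Fin n) | ∀ i, G.mulVec y i ≤ h i}) (hne : S.Nonempty)
    (p : EuclideanSpace ℝ (Fin n)) (hp : p ∈ S ∧ ∀ y ∈ S, ‖a - p‖ ≤ ‖a - y‖)
    (x : EuclideanSpace ℝ (Fin n)) (lam : Fin m → ℝ) (ε : ℝ) (hε : 0 ≤ ε)
    (hdual : ∀ i, 0 ≤ lam i)
    (hprim : ∀ i, G.mulVec x i ≤ h i)
    (hcs : ∀ i, lam i * (G.mulVec x i - h i) = 0)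
    (hres : ‖(x - a) + (WithLp.equiv 2 (Fin n → ℝ)).symm ((Gᵀ).mulVec lam)‖ ≤ ε) :
    ‖x - p‖ ≤ ε := by
  set u : EuclideanSpace ℝ (Fin n) := (WithLp.equiv 2 (Fin n → ℝ)).symm ((Gᵀ).mulVec lam) with hu
  set r : EuclideanSpace ℝ (Fin n) := (x - a) + u with hr
  have hxS : x ∈ S := by rw [hS]; exact hprim
  -- convexity of S
  have hconv : Convex ℝ S := by
    rw [hS]
    intro y hy z hz ty tz hty htz hsum
    intro i
    have hmv : G.mulVec (ty • y + tz • z) i = ty * G.mulVec y i + tz * G.mulVec z i := by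
      have : G.mulVec (ty • (y : Fin n → ℝ) + tz • (z : Fin n → ℝ))
          = ty • G.mulVec y + tz • G.mulVec z := by
        rw [Matrix.mulVec_add, Matrix.mulVec_smul, Matrix.mulVec_smul]
      exact congrFun this i
    rw [WithLp.ofLp_add, WithLp.ofLp_smul, WithLp.ofLp_smul, hmv]
    calc ty * G.mulVec y i + tz * G.mulVec z i
        ≤ ty * h i + tz * h i := by
          gcongr
          · exact hy i
          · exact hz i
      _ = h i := by rw [← add_mul, hsum, one_mul]
  -- variational inequality
  have hvi : ∀ w ∈ S, inner ℝ (a - p) (w - p) ≤ (0 : ℝ) := by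
    haveI : Nonempty S := hne.to_subtype
    have hbdd : BddBelow (Set.range fun w : S => ‖a - (w : EuclideanSpace ℝ (Fin n))‖) :=
      ⟨0, by rintro c ⟨w, rfl⟩; exact norm_nonneg _⟩
    have hinf : ‖a - p‖ = ⨅ w : S, ‖a - w‖ := by
      apply le_antisymm
      · exact le_ciInf fun w => hp.2 w w.2
      · exact ciInf_le hbdd ⟨p, hp.1⟩
    exact (norm_eq_iInf_iff_real_inner_le_zero hconv hp.1).mp hinf
  have hvx : inner ℝ (a - p) (x - p) ≤ (0 : ℝ) := hvi x hxS
  -- inner product with u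
  have hinner_u : inner ℝ u (x - p) = (G.mulVec ((x : Fin n → ℝ) - p)) ⬝ᵥ lam := by
    have : inner ℝ u (x - p) = ((Gᵀ).mulVec lam) ⬝ᵥ ((x : Fin n → ℝ) - p) := by
      rw [hu]
      simp [PiLp.inner_apply, dotProduct, mul_comm]
    rw [this, dotProduct_comm, dotProduct_mulVec, Matrix.vecMul_transpose]
  have hu_nonneg : (0 : ℝ) ≤ inner ℝ u (x - p) := by
    rw [hinner_u]
    have hsub : G.mulVec ((x : Fin n → ℝ) - p) = G.mulVec x - G.mulVec p :=
      Matrix.mulVec_sub G _ _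
    rw [hsub]
    unfold dotProduct
    apply Finset.sum_nonneg
    intro i _
    have h1 : lam i * G.mulVec x i = lam i * h i := by
      have := hcs i; nlinarith [hcs i]
    have hpfeas : G.mulVec p i ≤ h i := by
      have := hp.1; rw [hS] at this; exact this i
    have : (G.mulVec x - G.mulVec p) i * lam i
        = lam i * h i - lam i * G.mulVec p i := by
      simp [Pi.sub_apply, mul_comm, mul_sub, h1.symm]
      ring_nf
      nlinarith [hcs i]
    rw [this]
    have := hdual i
    nlinarith
  -- main estimate
  have key : ‖x - p‖ ^ 2 ≤ ε * ‖x - p‖ := by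
    have h1 : (inner ℝ (x - p) (x - p) : ℝ) = inner ℝ r (x - p) - inner ℝ u (x - p) + inner ℝ (a - p) (x - p) := by
      have : (x : EuclideanSpace ℝ (Fin n)) - p = (r - u) + (a - p) := by
        rw [hr]; abel
      rw [show (inner ℝ (x - p) (x - p) : ℝ) = inner ℝ ((r - u) + (a - p)) (x - p) by rw [← this],
        inner_add_left, inner_sub_left]
    have h2 : (inner ℝ (x - p) (x - p) : ℝ) ≤ inner ℝ r (x - p) := by
      rw [h1]; linarith
    have h3 : (inner ℝ r (x - p) : ℝ) ≤ ‖r‖ * ‖x - p‖ := real_inner_le_norm r (x - p)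
    have h4 : ‖r‖ * ‖x - p‖ ≤ ε * ‖x - p‖ := by
      apply mul_le_mul_of_nonneg_right _ (norm_nonneg _)
      exact hres
    calc ‖x - p‖ ^ 2 = inner ℝ (x - p) (x - p) := (real_inner_self_eq_norm_sq _).symm
      _ ≤ inner ℝ r (x - p) := h2
      _ ≤ ‖r‖ * ‖x - p‖ := h3
      _ ≤ ε * ‖x - p‖ := h4
  rcases eq_or_lt_of_le (norm_nonneg (x - p)) with h0 | h0
  · rw [← h0]; exact hε
  · nlinarith [key]
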